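/- Let U be a linear operator on ℂ^m ⊗ ℂ^n (identified with the space of m×n complex matrices via the vector–operator isomorphism). If ‖U v‖ = ‖v‖ for every separable vector v = a ⊗ b (with a ∈ ℂ^m, b ∈ ℂ^n), then U*U = I, i.e., U is unitary. -/

import Mathlib

noncomputable section

open scoped ComplexConjugate

/-- The elementary tensor `a ⊗ b` in `ℂ^m ⊗ ℂ^n ≅ ℂ^(m×n)`. -/
def tens {m n : ℕ} (a : EuclideanSpace ℂ (Fin m)) (b : EuclideanSpace ℂ (Fin n)) :
    EuclideanSpace ℂ (Fin m × Fin n) :=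
  WithLp.toLp 2 (fun p : Fin m × Fin n => a p.1 * b p.2)

/-- `a ↦ tens a b` as a linear map. -/
def tensLa {m n : ℕ} (b : EuclideanSpace ℂ (Fin n)) :
    EuclideanSpace ℂ (Fin m) →ₗ[ℂ] EuclideanSpace ℂ (Fin m × Fin n) where
  toFun a := tens a b
  map_add' x y := by ext p; simp [tens]; ring
  map_smul' c x := by ext p; simp [tens]; ring

/-- `b ↦ tens a b` as a linear map. -/
def tensLb {m n : ℕ} (a : EuclideanSpace ℂ (Fin m)) :
    EuclideanSpace ℂ (Fin n) →ₗ[ℂ] EuclideanSpace ℂ (Fin m × Fin n) where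
  toFun b := tens a b
  map_add' x y := by ext p; simp [tens]; ring
  map_smul' c x := by ext p; simp [tens]; ring

/-- If a linear operator on `ℂ^m ⊗ ℂ^n` preserves the norm of every separable vector,
then it is unitary, i.e. `U* U = I`. -/
theorem stmt0 {m n : ℕ}
    (U : EuclideanSpace ℂ (Fin m × Fin n) →ₗ[ℂ] EuclideanSpace ℂ (Fin m × Fin n))
    (h : ∀ (a : EuclideanSpace ℂ (Fin m)) (b : EuclideanSpace ℂ (Fin n)),
      ‖U (tens a b)‖ = ‖tens a b‖) :
    LinearMap.adjoint U ∘ₗ U = LinearMap.id := by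
  set A : EuclideanSpace ℂ (Fin m × Fin n) →ₗ[ℂ] EuclideanSpace ℂ (Fin m × Fin n) :=
    LinearMap.adjoint U ∘ₗ U - LinearMap.id with hAdef
  suffices hA0 : A = 0 by
    have := sub_eq_zero.mp hA0
    simpa using this
  -- diagonal vanishing on product vectors
  have key0 : ∀ (a : EuclideanSpace ℂ (Fin m)) (b : EuclideanSpace ℂ (Fin n)),
      (inner ℂ (A (tens a b)) (tens a b) : ℂ) = 0 := by
    intro a b
    have h1 : (inner ℂ ((LinearMap.adjoint U ∘ₗ U) (tens a b)) (tens a b) : ℂ)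
        = inner ℂ (U (tens a b)) (U (tens a b)) := by
      simp only [LinearMap.comp_apply]
      rw [LinearMap.adjoint_inner_left]
    have h2 : (inner ℂ (U (tens a b)) (U (tens a b)) : ℂ) = inner ℂ (tens a b) (tens a b) := by
      rw [inner_self_eq_norm_sq_to_K, inner_self_eq_norm_sq_to_K, h]
    simp only [hAdef, LinearMap.sub_apply, LinearMap.id_apply, inner_sub_left, h1, h2, sub_self]
  -- polarize in `a`
  have key1 : ∀ (b : EuclideanSpace ℂ (Fin n)) (a a' : EuclideanSpace ℂ (Fin m)),
      (inner ℂ (A (tens a b)) (tens a' b) : ℂ) = 0 := by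
    intro b a a'
    have hT : (LinearMap.adjoint (tensLa b) ∘ₗ A ∘ₗ tensLa b :
        EuclideanSpace ℂ (Fin m) →ₗ[ℂ] EuclideanSpace ℂ (Fin m)) = 0 := by
      rw [← inner_map_self_eq_zero]
      intro x
      simp only [LinearMap.comp_apply]
      rw [LinearMap.adjoint_inner_left]
      exact key0 x b
    have := congrArg (fun T => (inner ℂ (T a) a' : ℂ)) hT
    simp only [LinearMap.comp_apply, LinearMap.zero_apply, inner_zero_left] at this
    rwa [LinearMap.adjoint_inner_left] at this
  -- polarize in `b`
  have key2 : ∀ (a a' : EuclideanSpace ℂ (Fin m)) (b b' : EuclideanSpace ℂ (Fin n)),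
      (inner ℂ (A (tens a b)) (tens a' b') : ℂ) = 0 := by
    intro a a' b b'
    have hT : (LinearMap.adjoint (tensLb a') ∘ₗ A ∘ₗ tensLb a :
        EuclideanSpace ℂ (Fin n) →ₗ[ℂ] EuclideanSpace ℂ (Fin n)) = 0 := by
      rw [← inner_map_self_eq_zero]
      intro x
      simp only [LinearMap.comp_apply]
      rw [LinearMap.adjoint_inner_left]
      exact key1 x a a'
    have := congrArg (fun T => (inner ℂ (T b) b' : ℂ)) hT
    simp only [LinearMap.comp_apply, LinearMap.zero_apply, inner_zero_left] at this
    rwa [LinearMap.adjoint_inner_left] at this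
  -- singles are elementary tensors
  have hsingle : ∀ (i : Fin m) (j : Fin n),
      (EuclideanSpace.single (i, j) (1 : ℂ)) =
        tens (EuclideanSpace.single i 1) (EuclideanSpace.single j 1) := by
    intro i j
    ext p
    simp [tens, EuclideanSpace.single_apply, Prod.ext_iff]
    aesop
  -- A vanishes on product vectors
  have hAzero : ∀ (a : EuclideanSpace ℂ (Fin m)) (b : EuclideanSpace ℂ (Fin n)),
      A (tens a b) = 0 := by
    intro a b
    ext p
    have := key2 a (EuclideanSpace.single p.1 1) b (EuclideanSpace.single p.2 1)
    rw [← hsingle] at this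
    have h3 : (inner ℂ (A (tens a b)) (EuclideanSpace.single p (1:ℂ)) : ℂ)
        = conj ((A (tens a b)) p) := by
      rw [EuclideanSpace.inner_single_right]
      simp
    rw [h3] at this
    simpa using congrArg conj this
  apply Module.Basis.ext (EuclideanSpace.basisFun (Fin m × Fin n) ℂ).toBasis
  intro p
  simp only [OrthonormalBasis.coe_toBasis, EuclideanSpace.basisFun_apply, LinearMap.zero_apply]
  rw [hsingle p.1 p.2]
  exact hAzero _ _
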